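/- For every n ≥ 3 and every k with 1 ≤ k ≤ n, there exist n closed line segments in ℝ³ whose set of transversals is infinite and has exactly k connected components, i.e., there are transversals T₁, …, T_k pairwise in distinct connected components of transversals, and every transversal lies in the same connected component as some T_j. -/

import Mathlib

open Set Real

noncomputable section

/-- The line in ℝ³ through `a` with direction `v`. -/
def lineThrough (a v : ℝ × ℝ × ℝ) : Set (ℝ × ℝ × ℝ) :=
  {p | ∃ r : ℝ, p = a + r • v}

/-- `L` is a line in ℝ³. -/
def IsLine (L : Set (ℝ × ℝ × ℝ)) : Prop :=
  ∃ a v : ℝ × ℝ × ℝ, v ≠ 0 ∧ L = lineThrough a v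

/-- `L` is a transversal to the family of sets `s`: it is a line meeting every `s i`. -/
def IsTransversal {n : ℕ} (s : Fin n → Set (ℝ × ℝ × ℝ)) (L : Set (ℝ × ℝ × ℝ)) : Prop :=
  IsLine L ∧ ∀ i, (L ∩ s i).Nonempty

/-- Two transversals `L₀`, `L₁` to the family `s` lie in the same connected component of
transversals: one can be moved continuously to the other while remaining a transversal. -/
def SameComp {n : ℕ} (s : Fin n → Set (ℝ × ℝ × ℝ)) (L₀ L₁ : Set (ℝ × ℝ × ℝ)) : Prop :=
  ∃ a v : ℝ → ℝ × ℝ × ℝ,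
    ContinuousOn a (Icc 0 1) ∧ ContinuousOn v (Icc 0 1) ∧
    (∀ t ∈ Icc (0:ℝ) 1, v t ≠ 0) ∧
    (∀ t ∈ Icc (0:ℝ) 1, ∀ i, (lineThrough (a t) (v t) ∩ s i).Nonempty) ∧
    lineThrough (a 0) (v 0) = L₀ ∧ lineThrough (a 1) (v 1) = L₁

section AuxiliaryDevelopment

variable {n k : ℕ}

def Lpt (u : ℝ × ℝ) (t : ℝ) : ℝ × ℝ × ℝ := (u.1 - t * u.2, u.2 + t * u.1, t)

/-- ruling-2 line -/
def Mline (w : ℝ × ℝ) : Set (ℝ × ℝ × ℝ) := lineThrough (w.1, w.2, 0) (w.2, -w.1, 1)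

def Seg (u : ℝ × ℝ) (T : ℝ) : Set (ℝ × ℝ × ℝ) := segment ℝ (Lpt u (-T)) (Lpt u T)

lemma mem_lineThrough {p a v : ℝ × ℝ × ℝ} : p ∈ lineThrough a v ↔ ∃ r : ℝ, p = a + r • v :=
  Iff.rfl

lemma smul_triple (r : ℝ) (x y z : ℝ) : r • ((x,y,z) : ℝ×ℝ×ℝ) = (r*x, r*y, r*z) := rfl

lemma add_triple (x y z x' y' z' : ℝ) : ((x,y,z) : ℝ×ℝ×ℝ) + (x',y',z') = (x+x', y+y', z+z') := rfl

lemma mem_Mline_iff {w : ℝ × ℝ} {p : ℝ × ℝ × ℝ} :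
    p ∈ Mline w ↔ ∃ r : ℝ, p = (w.1 + r * w.2, w.2 - r * w.1, r) := by
  unfold Mline lineThrough
  constructor
  · rintro ⟨r, rfl⟩
    exact ⟨r, by refine Prod.ext ?_ (Prod.ext ?_ ?_) <;> simp <;> ring⟩
  · rintro ⟨r, rfl⟩
    exact ⟨r, by refine Prod.ext ?_ (Prod.ext ?_ ?_) <;> simp <;> ring⟩

lemma mem_Seg_iff {u : ℝ × ℝ} {T : ℝ} (hT : 0 < T) {p : ℝ × ℝ × ℝ} :
    p ∈ Seg u T ↔ ∃ t : ℝ, |t| ≤ T ∧ p = Lpt u t := by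
  unfold Seg
  rw [segment_eq_image]
  constructor
  · rintro ⟨θ, hθ, rfl⟩
    refine ⟨-T + θ * (2*T), ?_, ?_⟩
    · rw [abs_le]; constructor <;> nlinarith [hθ.1, hθ.2]
    · simp only [Lpt, smul_triple, add_triple, Prod.mk.injEq]
      refine ⟨by ring, by ring, by ring⟩
  · rintro ⟨t, ht, rfl⟩
    rw [abs_le] at ht
    refine ⟨(t + T)/(2*T), ⟨div_nonneg (by linarith [ht.1]) (by positivity), by rw [div_le_one (by positivity)]; linarith [ht.2]⟩, ?_⟩
    simp only [Lpt, smul_triple, add_triple, Prod.mk.injEq]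
    refine ⟨by field_simp; ring, by field_simp; ring, by field_simp; ring⟩


set_option maxHeartbeats 1000000 in
lemma meets_iff {u w : ℝ × ℝ} {T m : ℝ} (hu : u.1^2 + u.2^2 = 1) (hw : w.1^2 + w.2^2 = 1)
    (hm : -1 < m) (hT : 0 < T) (hTm : T^2 * (1 + m) = 1 - m) :
    (Mline w ∩ Seg u T).Nonempty ↔ m ≤ u.1 * w.1 + u.2 * w.2 := by
  have hsc : (u.1*w.2 - u.2*w.1)^2 + (u.1*w.1 + u.2*w.2)^2 = 1 := by
    linear_combination (w.1^2 + w.2^2) * hu + hw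
  constructor
  · rintro ⟨p, hpM, hpS⟩
    rw [mem_Mline_iff] at hpM
    rw [mem_Seg_iff hT] at hpS
    obtain ⟨r, rfl⟩ := hpM
    obtain ⟨t, htT, hpt⟩ := hpS
    have h3 : r = t := congrArg (fun q => q.2.2) hpt
    subst h3
    have e1 : u.1 - r * u.2 = w.1 + r * w.2 := (congrArg (fun q => q.1) hpt).symm
    have e2 : u.2 + r * u.1 = w.2 - r * w.1 := (congrArg (fun q => q.2.1) hpt).symm
    have h1 : r * (u.1*w.2 - u.2*w.1) = 1 - (u.1*w.1 + u.2*w.2) := by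
      linear_combination (-u.1) * e1 - u.2 * e2 + hu
    have h2 : r * (1 + (u.1*w.1 + u.2*w.2)) = u.1*w.2 - u.2*w.1 := by
      linear_combination w.1 * e2 - w.2 * e1 - r * hw
    have hc1 : -1 ≤ u.1*w.1 + u.2*w.2 := by nlinarith [hsc, sq_nonneg (u.1*w.2 - u.2*w.1)]
    have hcpos : 0 < 1 + (u.1*w.1 + u.2*w.2) := by
      rcases lt_or_eq_of_le hc1 with h | h
      · linarith
      · exfalso
        have hz : 1 + (u.1*w.1 + u.2*w.2) = 0 := by linarith
        have : r * (u.1*w.2 - u.2*w.1) = 0 := by rw [← h2, hz]; ring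
        rw [h1] at this; linarith
    have ht2 : r^2 ≤ T^2 := by
      have h := abs_le.1 htT
      nlinarith [h.1, h.2]
    have key : r^2 * (1 + (u.1*w.1 + u.2*w.2)) = 1 - (u.1*w.1 + u.2*w.2) := by
      nlinarith [h1, h2]
    have hpm : (0:ℝ) < 1 + m := by linarith
    have h5 : r^2*((1 + (u.1*w.1 + u.2*w.2))*(1+m)) ≤ T^2*((1 + (u.1*w.1 + u.2*w.2))*(1+m)) :=
      mul_le_mul_of_nonneg_right ht2 (le_of_lt (mul_pos hcpos hpm))
    nlinarith [h5, key, hTm, hcpos, hpm]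
  · intro hmc
    have hcpos : 0 < 1 + (u.1*w.1 + u.2*w.2) := by linarith
    have hpm : (0:ℝ) < 1 + m := by linarith
    set t := (u.1*w.2 - u.2*w.1) / (1 + (u.1*w.1 + u.2*w.2)) with htdef
    have ht1 : t * (1 + (u.1*w.1 + u.2*w.2)) = u.1*w.2 - u.2*w.1 := by
      rw [htdef]; exact div_mul_cancel₀ _ (ne_of_gt hcpos)
    have hss : (u.1*w.2 - u.2*w.1)^2 = (1 - (u.1*w.1 + u.2*w.2)) * (1 + (u.1*w.1 + u.2*w.2)) := by
      linear_combination hsc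
    have ht2 : t^2 * (1 + (u.1*w.1 + u.2*w.2)) = 1 - (u.1*w.1 + u.2*w.2) := by
      have hts : t^2 * (1 + (u.1*w.1 + u.2*w.2))^2 = (u.1*w.2 - u.2*w.1)^2 := by
        linear_combination (t * (1 + (u.1*w.1 + u.2*w.2)) + (u.1*w.2 - u.2*w.1)) * ht1
      have l3 : (t^2 * (1 + (u.1*w.1 + u.2*w.2))) * (1 + (u.1*w.1 + u.2*w.2))
          = (1 - (u.1*w.1 + u.2*w.2)) * (1 + (u.1*w.1 + u.2*w.2)) := by
        linear_combination hts + hss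
      exact mul_right_cancel₀ (ne_of_gt hcpos) l3
    have htT : |t| ≤ T := by
      have e8 : (1 - (u.1*w.1 + u.2*w.2))*(1+m) ≤ (1-m)*(1 + (u.1*w.1 + u.2*w.2)) := by
        nlinarith [hmc]
      have e9 : t^2*((1 + (u.1*w.1 + u.2*w.2))*(1+m)) ≤ T^2*((1 + (u.1*w.1 + u.2*w.2))*(1+m)) := by
        have l1 : t^2*((1 + (u.1*w.1 + u.2*w.2))*(1+m)) = (1 - (u.1*w.1 + u.2*w.2))*(1+m) := by
          linear_combination (1+m)*ht2
        have l2 : T^2*((1 + (u.1*w.1 + u.2*w.2))*(1+m)) = (1-m)*(1 + (u.1*w.1 + u.2*w.2)) := by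
          linear_combination (1 + (u.1*w.1 + u.2*w.2))*hTm
        rw [l1, l2]; exact e8
      have h4 : t^2 ≤ T^2 := le_of_mul_le_mul_right e9 (mul_pos hcpos hpm)
      have := Real.sqrt_le_sqrt h4
      rwa [Real.sqrt_sq_eq_abs, Real.sqrt_sq (le_of_lt hT)] at this
    refine ⟨Lpt u t, ?_, (mem_Seg_iff hT).2 ⟨t, htT, rfl⟩⟩
    rw [mem_Mline_iff]
    refine ⟨t, ?_⟩
    have key1 : (u.1 - w.1) * (1 + (u.1*w.1 + u.2*w.2)) = (u.1*w.2 - u.2*w.1) * (u.2 + w.2) := by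
      linear_combination w.1*hu - u.1*hw
    have key2 : (w.2 - u.2) * (1 + (u.1*w.1 + u.2*w.2)) = (u.1*w.2 - u.2*w.1) * (u.1 + w.1) := by
      linear_combination (-w.2)*hu + u.2*hw
    have c1 : u.1 - t * u.2 = w.1 + t * w.2 := by
      have hz : (u.1 - t*u.2 - (w.1 + t*w.2)) * (1 + (u.1*w.1 + u.2*w.2)) = 0 := by
        linear_combination key1 - (u.2 + w.2) * ht1
      rcases mul_eq_zero.1 hz with h | h
      · linarith
      · linarith
    have c2 : u.2 + t * u.1 = w.2 - t * w.1 := by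
      have hz : (u.2 + t*u.1 - (w.2 - t*w.1)) * (1 + (u.1*w.1 + u.2*w.2)) = 0 := by
        linear_combination (-1) * key2 + (u.1 + w.1) * ht1
      rcases mul_eq_zero.1 hz with h | h
      · linarith
      · linarith
    show Lpt u t = _
    unfold Lpt
    exact Prod.ext (by simpa using c1) (Prod.ext (by simpa using c2) rfl)


lemma quad_zero {A B C r1 r2 r3 : ℝ} (h12 : r1 ≠ r2) (h13 : r1 ≠ r3) (h23 : r2 ≠ r3)
    (e1 : A*r1^2 + B*r1 + C = 0) (e2 : A*r2^2 + B*r2 + C = 0) (e3 : A*r3^2 + B*r3 + C = 0) :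
    A = 0 ∧ B = 0 ∧ C = 0 := by
  have hA : A * ((r1-r2)*(r1-r3)*(r2-r3)) = 0 := by
    linear_combination (r2 - r3)*e1 - (r1 - r3)*e2 + (r1 - r2)*e3
  have hAz : A = 0 := by
    rcases mul_eq_zero.1 hA with h | h
    · exact h
    · exfalso
      rcases mul_eq_zero.1 h with h' | h'
      · rcases mul_eq_zero.1 h' with h'' | h''
        · exact h12 (by linarith [sub_eq_zero.1 h''])
        · exact h13 (sub_eq_zero.1 h'')
      · exact h23 (sub_eq_zero.1 h')
  subst hAz
  have hB : B * (r1 - r2) = 0 := by linear_combination e1 - e2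
  have hBz : B = 0 := by
    rcases mul_eq_zero.1 hB with h | h
    · exact h
    · exact absurd (sub_eq_zero.1 h) h12
  subst hBz
  refine ⟨rfl, rfl, by linarith [e1]⟩

lemma Lpt_inj {u u' : ℝ × ℝ} {t t' : ℝ} (h : Lpt u t = Lpt u' t') : u = u' ∧ t = t' := by
  unfold Lpt at h
  have h3 : t = t' := congrArg (fun q => q.2.2) h
  subst h3
  have h1 : u.1 - t*u.2 = u'.1 - t*u'.2 := congrArg (fun q => q.1) h
  have h2 : u.2 + t*u.1 = u'.2 + t*u'.1 := congrArg (fun q => q.2.1) h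
  have d1 : (u.1 - u'.1) * (1 + t^2) = 0 := by linear_combination h1 + t * h2
  have d2 : (u.2 - u'.2) * (1 + t^2) = 0 := by linear_combination h2 - t * h1
  have ht : (0:ℝ) < 1 + t^2 := by positivity
  have e1 : u.1 = u'.1 := by
    rcases mul_eq_zero.1 d1 with h | h
    · linarith [sub_eq_zero.1 h]
    · linarith
  have e2 : u.2 = u'.2 := by
    rcases mul_eq_zero.1 d2 with h | h
    · linarith [sub_eq_zero.1 h]
    · linarith
  exact ⟨Prod.ext e1 e2, rfl⟩

lemma lineThrough_smul {a v : ℝ×ℝ×ℝ} {c : ℝ} (hc : c ≠ 0) :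
    lineThrough a (c • v) = lineThrough a v := by
  ext p
  constructor
  · rintro ⟨r, rfl⟩; exact ⟨r * c, by rw [mul_smul]⟩
  · rintro ⟨r, rfl⟩
    exact ⟨r / c, by rw [smul_smul, div_mul_cancel₀ _ hc]⟩

lemma lineThrough_shift {a v : ℝ×ℝ×ℝ} (s : ℝ) :
    lineThrough (a + s • v) v = lineThrough a v := by
  ext p
  constructor
  · rintro ⟨r, rfl⟩; exact ⟨s + r, by rw [add_smul]; abel⟩
  · rintro ⟨r, rfl⟩; exact ⟨r - s, by rw [sub_smul]; abel⟩

lemma lineThrough_dir {a v b u : ℝ×ℝ×ℝ} (hv : v ≠ 0) (h : lineThrough a v = lineThrough b u) :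
    ∃ l : ℝ, l ≠ 0 ∧ v = l • u := by
  have ha : a ∈ lineThrough b u := h ▸ ⟨0, by simp⟩
  have hav : a + v ∈ lineThrough b u := h ▸ ⟨1, by simp⟩
  obtain ⟨r0, hr0⟩ := ha
  obtain ⟨r1, hr1⟩ := hav
  have hveq : v = (r1 - r0) • u := by
    have : a + v - a = (b + r1 • u) - (b + r0 • u) := by rw [← hr0, ← hr1]
    simpa [sub_smul] using this
  refine ⟨r1 - r0, ?_, hveq⟩
  intro hz
  exact hv (by rw [hveq, hz, zero_smul])


def eta (n k : ℕ) : ℝ := 1/(2*n*k)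
def del (n k : ℕ) : ℝ := eta n k / 2
def psi (n k : ℕ) (i : ℕ) : ℝ :=
  if i < k then -π + 2*π*i/k else -π + (min (i-k+1) 2 : ℕ) * del n k
def uvec (n k : ℕ) (i : ℕ) : ℝ × ℝ := (-Real.cos (psi n k i), -Real.sin (psi n k i))
def mconst (n k : ℕ) : ℝ := -Real.cos (eta n k)
def Tconst (n k : ℕ) : ℝ := Real.sqrt ((1 - mconst n k)/(1 + mconst n k))


lemma nR (hn : 3 ≤ n) : (3:ℝ) ≤ (n:ℝ) := by exact_mod_cast hn
lemma kR (hk : 1 ≤ k) : (1:ℝ) ≤ (k:ℝ) := by exact_mod_cast hk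

lemma eta_pos (hn : 3 ≤ n) (hk : 1 ≤ k) : 0 < eta n k := by
  unfold eta
  have h1 := nR hn; have h2 := kR hk
  positivity

lemma eta_le (hn : 3 ≤ n) (hk : 1 ≤ k) : eta n k ≤ 1/6 := by
  unfold eta
  have h1 := nR hn; have h2 := kR hk
  rw [div_le_div_iff₀ (by positivity) (by norm_num)]
  nlinarith

lemma eta_mul_k (hn : 3 ≤ n) (hk : 1 ≤ k) : (k:ℝ) * eta n k ≤ 1/6 := by
  unfold eta
  have h1 := nR hn; have h2 := kR hk
  rw [mul_one_div, div_le_div_iff₀ (by positivity) (by norm_num)]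
  nlinarith

lemma del_pos (hn : 3 ≤ n) (hk : 1 ≤ k) : 0 < del n k := by
  have := eta_pos hn hk; unfold del; linarith

lemma cos_eta_lt_one (hn : 3 ≤ n) (hk : 1 ≤ k) : Real.cos (eta n k) < 1 := by
  have h1 := eta_pos hn hk
  have h2 := eta_le hn hk
  have hpi := Real.pi_gt_three
  have := Real.cos_lt_cos_of_nonneg_of_le_pi (le_refl 0) (by linarith) h1
  simpa using this

lemma cos_eta_pos (hn : 3 ≤ n) (hk : 1 ≤ k) : 0 < Real.cos (eta n k) := by
  apply Real.cos_pos_of_mem_Ioo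
  constructor
  · have := eta_pos hn hk; have := Real.pi_gt_three; linarith
  · have := eta_le hn hk; have := Real.pi_gt_three; linarith

lemma m_gt (hn : 3 ≤ n) (hk : 1 ≤ k) : -1 < mconst n k := by
  have := cos_eta_lt_one hn hk; unfold mconst; linarith

lemma m_lt (hn : 3 ≤ n) (hk : 1 ≤ k) : mconst n k < 0 := by
  have := cos_eta_pos hn hk; unfold mconst; linarith

lemma T_pos (hn : 3 ≤ n) (hk : 1 ≤ k) : 0 < Tconst n k := by
  unfold Tconst
  apply Real.sqrt_pos.2
  have h1 := m_gt hn hk; have h2 := m_lt hn hk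
  apply div_pos <;> linarith

lemma T_eq (hn : 3 ≤ n) (hk : 1 ≤ k) : (Tconst n k)^2 * (1 + mconst n k) = 1 - mconst n k := by
  unfold Tconst
  have h1 := m_gt hn hk; have h2 := m_lt hn hk
  rw [Real.sq_sqrt (by apply div_nonneg <;> linarith)]
  rw [div_mul_eq_mul_div, mul_div_assoc, div_self (by linarith), mul_one]

lemma uvec_unit (i : ℕ) : (uvec n k i).1^2 + (uvec n k i).2^2 = 1 := by
  unfold uvec
  simp only
  nlinarith [Real.sin_sq_add_cos_sq (psi n k i)]

lemma psi_mem (hn : 3 ≤ n) (hk : 1 ≤ k) (i : ℕ) (hi : i < n) :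
    psi n k i ∈ Ico (-π) π := by
  unfold psi
  have hpi := Real.pi_gt_three
  have hkpos : (0:ℝ) < k := by have := kR hk; linarith
  split_ifs with h
  · constructor
    · have : 0 ≤ 2*π*(i:ℝ)/k := by positivity
      linarith
    · have hik : (i:ℝ) ≤ (k:ℝ) - 1 := by
        have : i + 1 ≤ k := h
        have := (Nat.cast_le (α := ℝ)).2 this
        push_cast at this; linarith
      have : 2*π*(i:ℝ)/k < 2*π := by
        rw [div_lt_iff₀ hkpos]
        nlinarith
      linarith
  · have hc : ((min (i-k+1) 2 : ℕ) : ℝ) ≤ 2 := by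
      have : min (i-k+1) 2 ≤ 2 := min_le_right _ _
      exact_mod_cast this
    have hc0 : (0:ℝ) ≤ ((min (i-k+1) 2 : ℕ) : ℝ) := Nat.cast_nonneg _
    have hd := del_pos hn hk
    have hdle : del n k ≤ 1/12 := by have := eta_le hn hk; unfold del; linarith
    constructor
    · nlinarith
    · nlinarith

lemma uvec_eq (hn : 3 ≤ n) (hk : 1 ≤ k) {i i' : ℕ} (hi : i < n) (hi' : i' < n)
    (h : uvec n k i = uvec n k i') : psi n k i = psi n k i' := by
  unfold uvec at h
  have h1 : Real.cos (psi n k i) = Real.cos (psi n k i') := by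
    have := congrArg (fun q => q.1) h; simp at this; linarith
  have h2 : Real.sin (psi n k i) = Real.sin (psi n k i') := by
    have := congrArg (fun q => q.2) h; simp at this; linarith
  have hexp : Complex.exp (psi n k i * Complex.I) = Complex.exp (psi n k i' * Complex.I) := by
    rw [Complex.exp_mul_I, Complex.exp_mul_I, ← Complex.ofReal_cos, ← Complex.ofReal_sin,
      ← Complex.ofReal_cos, ← Complex.ofReal_sin, h1, h2]
  obtain ⟨mz, hmz⟩ := Complex.exp_eq_exp_iff_exists_int.1 hexp
  have hI : ((psi n k i : ℂ)) * Complex.I = ((psi n k i' : ℝ) + mz * (2*π) : ℝ) * Complex.I := by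
    rw [hmz]; push_cast; ring
  have hreal : psi n k i = psi n k i' + mz * (2*π) := by
    have := mul_right_cancel₀ Complex.I_ne_zero hI
    exact_mod_cast this
  have hb1 := psi_mem hn hk i hi
  have hb2 := psi_mem hn hk i' hi'
  have hpi := Real.pi_pos
  have hmz0 : mz = 0 := by
    have hlt : |(mz:ℝ)| < 1 := by
      rw [abs_lt]
      constructor <;> nlinarith [hb1.1, hb1.2, hb2.1, hb2.2]
    exact_mod_cast (by exact_mod_cast abs_lt.1 hlt : -1 < mz ∧ mz < 1) |>.elim (fun h1' h2' => by omega)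
  rw [hreal, hmz0]
  push_cast; ring

lemma psi_zero (hk : 1 ≤ k) : psi n k 0 = -π := by
  unfold psi
  rw [if_pos (by omega : 0 < k)]
  simp

lemma psi_one (hk : 1 ≤ k) : psi n k 1 = if 1 < k then -π + 2*π/k else -π + del n k := by
  unfold psi
  split_ifs with h
  · norm_num
  · have : k = 1 := by omega
    subst this
    norm_num

lemma psi_two (hk : 1 ≤ k) :
    psi n k 2 = if 2 < k then -π + 4*π/k else if k = 2 then -π + del n k else -π + 2 * del n k := by
  unfold psi
  rcases lt_trichotomy k 2 with h | h | h
  · have : k = 1 := by omega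
    subst this
    norm_num
  · subst h
    norm_num
  · rw [if_pos h, if_pos h, ]
    push_cast; ring_nf

lemma psi_triple (hn : 3 ≤ n) (hk : 1 ≤ k) :
    psi n k 0 ≠ psi n k 1 ∧ psi n k 0 ≠ psi n k 2 ∧ psi n k 1 ≠ psi n k 2 := by
  have hpi := Real.pi_gt_three
  have hd1 : 0 < del n k := del_pos hn hk
  have hd2 : del n k ≤ 1/12 := by have := eta_le hn hk; unfold del; linarith
  rw [psi_zero hk, psi_one hk, psi_two hk]
  rcases lt_trichotomy k 2 with h | h | h
  · have hk1 : k = 1 := by omega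
    subst hk1
    rw [if_neg (by omega), if_neg (by omega), if_neg (by omega)]
    refine ⟨by intro hh; linarith, by intro hh; linarith, by intro hh; linarith⟩
  · subst h
    rw [if_pos (by omega), if_neg (by omega), if_pos rfl]
    have hppos : 0 < π := by linarith
    push_cast
    refine ⟨by intro hh; nlinarith, by intro hh; linarith, by intro hh; nlinarith⟩
  · rw [if_pos (by omega : 1 < k), if_pos h]
    have hkpos : (0:ℝ) < k := by
      have := kR hk; linarith
    have h1 : 0 < 2*π/(k:ℝ) := by positivity
    have h2 : 2*π/(k:ℝ) < 4*π/(k:ℝ) := by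
      rw [div_lt_div_iff₀ hkpos hkpos]
      nlinarith
    refine ⟨by intro hh; linarith, by intro hh; linarith, by intro hh; linarith⟩


set_option maxHeartbeats 1000000 in
lemma classify (hn : 3 ≤ n) (hk : 1 ≤ k) {a v : ℝ×ℝ×ℝ} (hv : v ≠ 0)
    (hmeet : ∀ i : Fin n, (lineThrough a v ∩ Seg (uvec n k i) (Tconst n k)).Nonempty) :
    v.2.2 ≠ 0 ∧
    (-(v.2.1)/v.2.2)^2 + (v.1/v.2.2)^2 = 1 ∧
    (∀ i : Fin n, mconst n k ≤ (uvec n k i).1 * (-(v.2.1)/v.2.2) + (uvec n k i).2 * (v.1/v.2.2)) ∧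
    lineThrough a v = Mline (-(v.2.1)/v.2.2, v.1/v.2.2) := by
  have hTp := T_pos hn hk
  have hpts : ∀ i : Fin n, ∃ r t : ℝ, |t| ≤ Tconst n k ∧ a + r • v = Lpt (uvec n k i) t := by
    intro i
    obtain ⟨P, hPL, hPS⟩ := hmeet i
    obtain ⟨r, hr⟩ := hPL
    obtain ⟨t, ht, hP⟩ := (mem_Seg_iff hTp).1 hPS
    exact ⟨r, t, ht, by rw [← hr, hP]⟩
  obtain ⟨r0, t0, ht0, hP0⟩ := hpts ⟨0, by omega⟩
  obtain ⟨r1, t1, ht1, hP1⟩ := hpts ⟨1, by omega⟩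
  obtain ⟨r2, t2, ht2, hP2⟩ := hpts ⟨2, by omega⟩
  simp only [Fin.val_mk] at hP0 hP1 hP2
  have htrip := psi_triple (n := n) hn hk
  have hu01 : uvec n k 0 ≠ uvec n k 1 := fun h => htrip.1 (uvec_eq hn hk (by omega) (by omega) h)
  have hu02 : uvec n k 0 ≠ uvec n k 2 := fun h => htrip.2.1 (uvec_eq hn hk (by omega) (by omega) h)
  have hu12 : uvec n k 1 ≠ uvec n k 2 := fun h => htrip.2.2 (uvec_eq hn hk (by omega) (by omega) h)
  have hr01 : r0 ≠ r1 := by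
    intro h; subst h
    exact hu01 (Lpt_inj (by rw [← hP0, hP1])).1
  have hr02 : r0 ≠ r2 := by
    intro h; subst h
    exact hu02 (Lpt_inj (by rw [← hP0, hP2])).1
  have hr12 : r1 ≠ r2 := by
    intro h; subst h
    exact hu12 (Lpt_inj (by rw [← hP1, hP2])).1
  set A := v.1^2 + v.2.1^2 - v.2.2^2 with hA_def
  set B := 2*(a.1*v.1 + a.2.1*v.2.1 - a.2.2*v.2.2) with hB_def
  set C := a.1^2 + a.2.1^2 - a.2.2^2 - 1 with hC_def
  have equad : ∀ (i : ℕ) (r t : ℝ), a + r • v = Lpt (uvec n k i) t → A*r^2 + B*r + C = 0 := by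
    intro i r t h
    have c1 : a.1 + r*v.1 = (uvec n k i).1 - t*(uvec n k i).2 := congrArg (fun q => q.1) h
    have c2 : a.2.1 + r*v.2.1 = (uvec n k i).2 + t*(uvec n k i).1 := congrArg (fun q => q.2.1) h
    have c3 : a.2.2 + r*v.2.2 = t := congrArg (fun q => q.2.2) h
    have hu := uvec_unit (n := n) (k := k) i
    rw [hA_def, hB_def, hC_def]
    linear_combination (a.1 + r*v.1 + ((uvec n k i).1 - t*(uvec n k i).2)) * c1
      + (a.2.1 + r*v.2.1 + ((uvec n k i).2 + t*(uvec n k i).1)) * c2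
      - (a.2.2 + r*v.2.2 + t) * c3 + (1 + t^2) * hu
  obtain ⟨hA, hB, hC⟩ := quad_zero hr01 hr02 hr12
    (equad 0 r0 t0 hP0) (equad 1 r1 t1 hP1) (equad 2 r2 t2 hP2)
  have hv3 : v.2.2 ≠ 0 := by
    intro h3
    apply hv
    have h1 : v.1 = 0 := by nlinarith [hA, sq_nonneg v.1, sq_nonneg v.2.1]
    have h2 : v.2.1 = 0 := by nlinarith [hA, sq_nonneg v.1, sq_nonneg v.2.1]
    exact Prod.ext h1 (Prod.ext h2 h3)
  set α := v.1/v.2.2 with hα_def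
  set β := v.2.1/v.2.2 with hβ_def
  have hαβ : α^2 + β^2 = 1 := by
    rw [hα_def, hβ_def]
    field_simp
    linear_combination hA
  set s := -(a.2.2)/v.2.2 with hs_def
  set a' := a + s • v with ha'_def
  have ea1 : a'.1 = a.1 + s*v.1 := rfl
  have ea2 : a'.2.1 = a.2.1 + s*v.2.1 := rfl
  have ezero : a.2.2 + s*v.2.2 = 0 := by
    rw [hs_def]; field_simp; ring
  have ea3 : a'.2.2 = 0 := ezero
  have hcs : a'.1^2 + a'.2.1^2 = 1 := by
    rw [ea1, ea2]
    linear_combination hC + s*hB + s^2*hA + (a.2.2 + s*v.2.2)*ezero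
  have horth : a'.1*α + a'.2.1*β = 0 := by
    have hBil : (a.1 + s*v.1)*v.1 + (a.2.1 + s*v.2.1)*v.2.1 = 0 := by
      linear_combination (1/2)*hB + s*hA + v.2.2*ezero
    rw [ea1, ea2, hα_def, hβ_def]
    field_simp
    linear_combination hBil
  have hD : (a'.1*β - a'.2.1*α - 1)*(a'.1*β - a'.2.1*α + 1) = 0 := by
    linear_combination (α^2 + β^2)*hcs + hαβ - (a'.1*α + a'.2.1*β)*horth
  have hline1 : lineThrough a v = lineThrough a' v := (lineThrough_shift s).symm
  have ha'c : a' = ((a'.1, a'.2.1, (0:ℝ)) : ℝ×ℝ×ℝ) := Prod.ext rfl (Prod.ext rfl ea3)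
  rcases mul_eq_zero.1 hD with hcase | hcase
  · exfalso
    have hcase1 : a'.1*β - a'.2.1*α = 1 := by
      have := sub_eq_zero.1 hcase; linarith
    have hzero : (α + a'.2.1)^2 + (β - a'.1)^2 = 0 := by
      linear_combination hαβ + hcs - 2*hcase1
    have hsq1 : (α + a'.2.1)^2 = 0 :=
      le_antisymm (by linarith [sq_nonneg (β - a'.1)]) (sq_nonneg _)
    have hsq2 : (β - a'.1)^2 = 0 :=
      le_antisymm (by linarith [sq_nonneg (α + a'.2.1)]) (sq_nonneg _)
    have hα1 : α = -a'.2.1 := by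
      have := pow_eq_zero_iff (n := 2) (by norm_num) |>.1 hsq1
      linarith
    have hβ1 : β = a'.1 := by
      have := pow_eq_zero_iff (n := 2) (by norm_num) |>.1 hsq2
      linarith
    have e1 : v.1 = v.2.2 * -a'.2.1 := by
      rw [← hα1, hα_def]; field_simp
    have e2 : v.2.1 = v.2.2 * a'.1 := by
      rw [← hβ1, hβ_def]; field_simp
    have hvrep : v = v.2.2 • ((-a'.2.1, a'.1, 1) : ℝ×ℝ×ℝ) :=
      Prod.ext e1 (Prod.ext e2 (by show v.2.2 = v.2.2*1; ring))
    have hline2 : lineThrough a v = lineThrough a' ((-a'.2.1, a'.1, 1) : ℝ×ℝ×ℝ) := by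
      refine hline1.trans ?_
      rw [← lineThrough_smul (a := a') (v := ((-a'.2.1, a'.1, 1) : ℝ×ℝ×ℝ)) hv3, ← hvrep]
    have hLpt : ∀ r' : ℝ, a' + r' • ((-a'.2.1, a'.1, 1) : ℝ×ℝ×ℝ) = Lpt (a'.1, a'.2.1) r' := by
      intro r'
      unfold Lpt
      refine Prod.ext ?_ (Prod.ext ?_ ?_)
      · show a'.1 + r' * -a'.2.1 = a'.1 - r' * a'.2.1
        ring
      · rfl
      · show a'.2.2 + r' * 1 = r'
        rw [ea3]; ring
    have hmem0 : a + r0 • v ∈ lineThrough a v := ⟨r0, rfl⟩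
    have hmem1 : a + r1 • v ∈ lineThrough a v := ⟨r1, rfl⟩
    rw [hline2] at hmem0 hmem1
    obtain ⟨q0, hq0⟩ := hmem0
    obtain ⟨q1, hq1⟩ := hmem1
    rw [hLpt q0] at hq0
    rw [hLpt q1] at hq1
    have h00 : (a'.1, a'.2.1) = uvec n k 0 := (Lpt_inj (by rw [← hq0, hP0])).1
    have h11 : (a'.1, a'.2.1) = uvec n k 1 := (Lpt_inj (by rw [← hq1, hP1])).1
    exact hu01 (h00 ▸ h11)
  · have hcase2 : a'.1*β - a'.2.1*α = -1 := by linarith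
    have hzero : (α - a'.2.1)^2 + (β + a'.1)^2 = 0 := by
      linear_combination hαβ + hcs + 2*hcase2
    have hsq1 : (α - a'.2.1)^2 = 0 :=
      le_antisymm (by linarith [sq_nonneg (β + a'.1)]) (sq_nonneg _)
    have hsq2 : (β + a'.1)^2 = 0 :=
      le_antisymm (by linarith [sq_nonneg (α - a'.2.1)]) (sq_nonneg _)
    have hα1 : α = a'.2.1 := by
      have := pow_eq_zero_iff (n := 2) (by norm_num) |>.1 hsq1
      linarith
    have hβ1 : β = -a'.1 := by
      have := pow_eq_zero_iff (n := 2) (by norm_num) |>.1 hsq2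
      linarith
    have e1 : v.1 = v.2.2 * a'.2.1 := by
      rw [← hα1, hα_def]; field_simp
    have e2 : v.2.1 = v.2.2 * -a'.1 := by
      rw [← hβ1, hβ_def]; field_simp
    have hvrep : v = v.2.2 • ((a'.2.1, -a'.1, 1) : ℝ×ℝ×ℝ) :=
      Prod.ext e1 (Prod.ext e2 (by show v.2.2 = v.2.2*1; ring))
    have hline2 : lineThrough a v = lineThrough a' ((a'.2.1, -a'.1, 1) : ℝ×ℝ×ℝ) := by
      refine hline1.trans ?_
      rw [← lineThrough_smul (a := a') (v := ((a'.2.1, -a'.1, 1) : ℝ×ℝ×ℝ)) hv3, ← hvrep]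
    have hw1 : -(v.2.1)/v.2.2 = a'.1 := by
      have h' : -(v.2.1)/v.2.2 = -β := by rw [hβ_def]; ring
      rw [h', hβ1]; ring
    have hw2 : v.1/v.2.2 = a'.2.1 := by
      rw [← hα_def]; exact hα1
    have hMeq : lineThrough a v = Mline (-(v.2.1)/v.2.2, v.1/v.2.2) := by
      calc lineThrough a v = lineThrough a' ((a'.2.1, -a'.1, 1) : ℝ×ℝ×ℝ) := hline2
        _ = lineThrough ((a'.1, a'.2.1, (0:ℝ)) : ℝ×ℝ×ℝ) ((a'.2.1, -a'.1, 1) : ℝ×ℝ×ℝ) := by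
            rw [← ha'c]
        _ = Mline (-(v.2.1)/v.2.2, v.1/v.2.2) := by
            unfold Mline
            show _ = lineThrough ((-(v.2.1)/v.2.2 : ℝ), (v.1/v.2.2 : ℝ), (0:ℝ))
              ((v.1/v.2.2 : ℝ), -(-(v.2.1)/v.2.2), (1:ℝ))
            rw [hw1, hw2]
    have hwunit : ((-(v.2.1)/v.2.2 : ℝ))^2 + ((v.1/v.2.2 : ℝ))^2 = 1 := by
      rw [hw1, hw2]; exact hcs
    refine ⟨hv3, ?_, ?_, hMeq⟩
    · rw [hw1, hα1]; exact hcs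
    · intro i
      have hm := hmeet i
      rw [hMeq] at hm
      have hthis := (meets_iff (uvec_unit (n := n) (k := k) i)
        (by show ((-(v.2.1)/v.2.2 : ℝ))^2 + ((v.1/v.2.2 : ℝ))^2 = 1; exact hwunit)
        (m_gt hn hk) hTp (T_eq hn hk)).1 hm
      have hthis' : mconst n k ≤ (uvec n k ↑i).1 * (-(v.2.1)/v.2.2) + (uvec n k ↑i).2 * (v.1/v.2.2) := hthis
      rw [hw1, hw2] at hthis'
      rw [hw1, hα1]
      exact hthis'


def Kt (n k : ℕ) (θ : ℝ) : Prop := ∀ i < n, Real.cos (θ - psi n k i) ≤ Real.cos (eta n k)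
def lj (n k : ℕ) (j : ℕ) : ℝ :=
  (if j = 0 then -π + (min (n-k) 2 : ℕ) * del n k else -π + 2*π*j/k) + eta n k
def rj (n k : ℕ) (j : ℕ) : ℝ := -π + 2*π*(j+1)/k - eta n k
def mu (n k : ℕ) (j : ℕ) : ℝ := -π + 2*π*j/k + π/k

lemma cos_le_cos_of {ε x : ℝ} (hε1 : 0 < ε) (hε2 : ε ≤ π)
    (h : (ε ≤ x ∧ x ≤ 2*π - ε) ∨ (ε ≤ -x ∧ -x ≤ 2*π - ε)) :
    Real.cos x ≤ Real.cos ε := by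
  have key : ∀ y : ℝ, ε ≤ y → y ≤ 2*π - ε → Real.cos y ≤ Real.cos ε := by
    intro y h1 h2
    rcases le_or_gt y π with h3 | h3
    · exact Real.cos_le_cos_of_nonneg_of_le_pi (le_of_lt hε1) h3 h1
    · have h4 : Real.cos y = Real.cos (2*π - y) := by rw [Real.cos_two_pi_sub]
      rw [h4]
      exact Real.cos_le_cos_of_nonneg_of_le_pi (le_of_lt hε1) (by linarith) (by linarith)
  rcases h with ⟨h1, h2⟩ | ⟨h1, h2⟩
  · exact key x h1 h2
  · rw [← Real.cos_neg]
    exact key (-x) h1 h2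

lemma cos_ge_imp {ε x : ℝ} (hε1 : 0 < ε) (hε2 : ε ≤ π) (h : Real.cos x ≤ Real.cos ε)
    (h0 : 0 < x) (h2 : x ≤ 2*π) : ε ≤ x ∧ x ≤ 2*π - ε := by
  constructor
  · by_contra hc
    push_neg at hc
    have := Real.cos_lt_cos_of_nonneg_of_le_pi (le_of_lt h0) hε2 hc
    linarith
  · by_contra hc
    push_neg at hc
    have h3 : Real.cos (2*π - x) = Real.cos x := Real.cos_two_pi_sub x
    have h4 : 0 ≤ 2*π - x := by linarith
    have := Real.cos_lt_cos_of_nonneg_of_le_pi h4 hε2 (by linarith)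
    rw [h3] at this
    linarith


lemma eps_le_two_pi_div_k (hn : 3 ≤ n) (hk : 1 ≤ k) : eta n k ≤ 2*π/k := by
  have hkp : (0:ℝ) < k := by have := kR hk; linarith
  rw [le_div_iff₀ hkp]
  have h1 := eta_mul_k hn hk
  have := Real.pi_gt_three
  nlinarith [mul_comm (eta n k) (k:ℝ)]

lemma two_eps_le_pi_div_k (hn : 3 ≤ n) (hk : 1 ≤ k) : eta n k + eta n k ≤ π/k := by
  have hkp : (0:ℝ) < k := by have := kR hk; linarith
  rw [le_div_iff₀ hkp]
  have h1 := eta_mul_k hn hk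
  have := Real.pi_gt_three
  nlinarith [mul_comm (eta n k) (k:ℝ)]

lemma L3 (hn : 3 ≤ n) (hk : 1 ≤ k) {j : ℕ} (hj : j < k) :
    mu n k j ∈ Icc (lj n k j) (rj n k j) := by
  have hkp : (0:ℝ) < k := by have := kR hk; linarith
  have hpi := Real.pi_gt_three
  have hε := eta_pos hn hk
  have hpik := two_eps_le_pi_div_k hn hk
  have hd : del n k = eta n k / 2 := rfl
  have he : ((min (n-k) 2 : ℕ):ℝ) * del n k ≤ eta n k := by
    have h1 : ((min (n-k) 2 : ℕ):ℝ) ≤ 2 := by exact_mod_cast min_le_right _ _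
    have h2 : (0:ℝ) ≤ ((min (n-k) 2 : ℕ):ℝ) := Nat.cast_nonneg _
    rw [hd]; nlinarith
  constructor
  · unfold lj mu
    split_ifs with h
    · subst h
      have hz : 2*π*((0:ℕ):ℝ)/(k:ℝ) = 0 := by norm_num
      rw [hz]
      linarith
    · linarith
  · unfold rj mu
    have hsplit : 2*π*((j:ℝ)+1)/k = 2*π*(j:ℝ)/k + 2*π/k := by field_simp
    have h2 : π/k + π/k = 2*π/k := by field_simp; ring
    push_cast
    rw [hsplit]
    linarith

set_option maxHeartbeats 1000000 in
lemma L1 (hn : 3 ≤ n) (hk : 1 ≤ k) (hkn : k ≤ n) {j : ℕ} (hj : j < k) {θ : ℝ}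
    (hθ : θ ∈ Icc (lj n k j) (rj n k j)) : Kt n k θ := by
  intro i hi
  have hkp : (0:ℝ) < k := by have := kR hk; linarith
  have hpi := Real.pi_gt_three
  have hε := eta_pos hn hk
  have hεle := eta_le hn hk
  have hεk := eta_mul_k hn hk
  have htpk := eps_le_two_pi_div_k hn hk
  have hd : del n k = eta n k / 2 := rfl
  have hjk : (j:ℝ) ≤ (k:ℝ) - 1 := by
    have : ((j+1:ℕ):ℝ) ≤ (k:ℝ) := by exact_mod_cast hj
    push_cast at this; linarith
  have hj1k : 2*π*((j:ℝ)+1)/k ≤ 2*π := by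
    rw [div_le_iff₀ hkp]
    nlinarith
  have hjfr0 : 0 ≤ 2*π*(j:ℝ)/k := by positivity
  have hglo : 2*π*(j:ℝ)/k + eta n k ≤ θ + π := by
    have h := hθ.1
    unfold lj at h
    split_ifs at h with h0
    · subst h0
      have he0 : (0:ℝ) ≤ ((min (n-k) 2 : ℕ):ℝ) := Nat.cast_nonneg _
      have hdp := del_pos hn hk
      have hz : 2*π*((0:ℕ):ℝ)/(k:ℝ) = 0 := by norm_num
      rw [hz]
      nlinarith
    · linarith
  have hglo0 : j = 0 → ((min (n-k) 2 : ℕ):ℝ) * del n k + eta n k ≤ θ + π := by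
    intro h0
    have h := hθ.1
    unfold lj at h
    rw [if_pos h0] at h
    linarith
  have hghi : θ + π ≤ 2*π*((j:ℝ)+1)/k - eta n k := by
    have h := hθ.2
    unfold rj at h
    push_cast at h
    linarith
  apply cos_le_cos_of hε (by linarith)
  unfold psi
  split_ifs with hik
  · -- real gap i < k
    have hikR : (i:ℝ) ≤ (k:ℝ) - 1 := by
      have : ((i+1:ℕ):ℝ) ≤ (k:ℝ) := by exact_mod_cast hik
      push_cast at this; linarith
    have hifr0 : 0 ≤ 2*π*(i:ℝ)/k := by positivity
    rcases le_or_gt i j with hij | hij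
    · left
      have hijR : (i:ℝ) ≤ (j:ℝ) := by exact_mod_cast hij
      have hfr : 2*π*(i:ℝ)/k ≤ 2*π*(j:ℝ)/k := by gcongr
      constructor
      · linarith
      · linarith
    · right
      have hijR : (j:ℝ) + 1 ≤ (i:ℝ) := by
        have : ((j+1:ℕ):ℝ) ≤ (i:ℝ) := by exact_mod_cast hij
        push_cast at this; linarith
      have hfr : 2*π*((j:ℝ)+1)/k ≤ 2*π*(i:ℝ)/k := by gcongr
      have hfr2 : 2*π*(i:ℝ)/k - 2*π*(j:ℝ)/k ≤ 2*π := by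
        have heq : 2*π*(i:ℝ)/k - 2*π*(j:ℝ)/k = 2*π*((i:ℝ)-(j:ℝ))/k := by ring
        rw [heq, div_le_iff₀ hkp]
        nlinarith
      constructor
      · linarith
      · linarith
  · -- extra gap i ≥ k
    left
    push_neg at hik
    have hei2 : ((min (i-k+1) 2 : ℕ):ℝ) ≤ 2 := by exact_mod_cast min_le_right _ _
    have hei0 : (0:ℝ) ≤ ((min (i-k+1) 2 : ℕ):ℝ) := Nat.cast_nonneg _
    have hdp := del_pos hn hk
    have heid : ((min (i-k+1) 2 : ℕ):ℝ) * del n k ≤ eta n k := by rw [hd]; nlinarith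
    rcases Nat.eq_zero_or_pos j with hj0 | hjpos
    · have hg0 := hglo0 hj0
      have hee : ((min (i-k+1) 2 : ℕ):ℝ) * del n k ≤ ((min (n-k) 2 : ℕ):ℝ) * del n k := by
        have : min (i-k+1) 2 ≤ min (n-k) 2 := by omega
        have hred : ((min (i-k+1) 2 : ℕ):ℝ) ≤ ((min (n-k) 2 : ℕ):ℝ) := by exact_mod_cast this
        nlinarith
      constructor
      · linarith
      · nlinarith [mul_nonneg hei0 (le_of_lt hdp)]
    · have hjR : (1:ℝ) ≤ (j:ℝ) := by exact_mod_cast hjpos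
      have h2pk : 2*π*(1:ℝ)/k ≤ 2*π*(j:ℝ)/k := by gcongr
      have h2pk' : 2*π/(k:ℝ) ≤ 2*π*(j:ℝ)/k := by
        have heq : 2*π*(1:ℝ)/(k:ℝ) = 2*π/(k:ℝ) := by ring
        linarith [heq ▸ h2pk]
      constructor
      · linarith
      · nlinarith [mul_nonneg hei0 (le_of_lt hdp)]


lemma cos_ge_imp2 {ε x : ℝ} (hε1 : 0 < ε) (hε2 : ε ≤ π) (h : Real.cos x ≤ Real.cos ε)
    (hlo : -ε < x) (hhi : x ≤ 2*π) : ε ≤ x := by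
  rcases le_or_gt x 0 with h0 | h0
  · exfalso
    have h3 : Real.cos (-x) = Real.cos x := Real.cos_neg x
    have := Real.cos_lt_cos_of_nonneg_of_le_pi (by linarith : (0:ℝ) ≤ -x) hε2 (by linarith)
    rw [h3] at this
    linarith
  · exact (cos_ge_imp hε1 hε2 h h0 hhi).1


lemma dot_to_cos {x y : ℝ} {φ : ℝ} (hcos : Real.cos φ = x) (hsin : Real.sin φ = y)
    (i : ℕ) (h : mconst n k ≤ (uvec n k i).1 * x + (uvec n k i).2 * y) :
    Real.cos (φ - psi n k i) ≤ Real.cos (eta n k) := by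
  unfold uvec mconst at h
  rw [← hcos, ← hsin] at h
  rw [Real.cos_sub]
  simp only at h
  nlinarith [h]

set_option maxHeartbeats 1000000 in
lemma L2 (hn : 3 ≤ n) (hk : 1 ≤ k) (hkn : k ≤ n) {x y : ℝ} {φ : ℝ}
    (hcos : Real.cos φ = x) (hsin : Real.sin φ = y)
    (hrange : φ ∈ Ioc (-π) π)
    (hdots : ∀ i : Fin n, mconst n k ≤ (uvec n k i).1 * x + (uvec n k i).2 * y) :
    ∃ j : ℕ, j < k ∧ φ ∈ Icc (lj n k j) (rj n k j) := by
  have hkp : (0:ℝ) < k := by have := kR hk; linarith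
  have hpi := Real.pi_gt_three
  have hε := eta_pos hn hk
  have hεle := eta_le hn hk
  have hεpi : eta n k ≤ π := by linarith
  have hKt : ∀ i < n, Real.cos (φ - psi n k i) ≤ Real.cos (eta n k) := by
    intro i hi
    exact dot_to_cos hcos hsin i (hdots ⟨i, hi⟩)
  -- gap 0 condition
  have h0 : Real.cos (φ + π) ≤ Real.cos (eta n k) := by
    have := hKt 0 (by omega)
    rw [psi_zero hk] at this
    simpa [sub_neg_eq_add] using this
  have hg := cos_ge_imp hε hεpi h0 (by linarith [hrange.1]) (by linarith [hrange.2])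
  -- define j
  set g := φ + π with hgdef
  have hgpos : 0 < g := by linarith [hrange.1]
  have hg2π : g ≤ 2*π - eta n k := hg.2
  set jz := ⌊g * k / (2*π)⌋ with hjz
  have hjz0 : 0 ≤ jz := Int.floor_nonneg.2 (by positivity)
  set j := jz.toNat with hjdef
  have hjcast : (j:ℝ) = (jz:ℝ) := by
    rw [hjdef]; exact_mod_cast Int.toNat_of_nonneg hjz0
  have hfl : (jz:ℝ) ≤ g * k / (2*π) := Int.floor_le _
  have hfl2 : g * k / (2*π) < (jz:ℝ) + 1 := Int.lt_floor_add_one _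
  have hjk : j < k := by
    have h1 : (jz:ℝ) < k := by
      calc (jz:ℝ) ≤ g * k / (2*π) := hfl
        _ < k := by
          rw [div_lt_iff₀ (by linarith : (0:ℝ) < 2*π)]
          nlinarith
    have : (j:ℝ) < (k:ℝ) := by rw [hjcast]; exact h1
    exact_mod_cast this
  have hglb : 2*π*(j:ℝ)/k ≤ g := by
    rw [div_le_iff₀ hkp] at *
    have := mul_le_mul_of_nonneg_right hfl (by linarith : (0:ℝ) ≤ 2*π)
    rw [div_mul_cancel₀] at this
    · rw [hjcast]; nlinarith
    · linarith
  have hgub : g < 2*π*((j:ℝ)+1)/k := by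
    rw [lt_div_iff₀ hkp]
    have := mul_lt_mul_of_pos_right hfl2 (by linarith : (0:ℝ) < 2*π)
    rw [div_mul_cancel₀] at this
    · rw [hjcast]; nlinarith
    · linarith
  -- strict lower bound
  have hglb' : 2*π*(j:ℝ)/k < g := by
    rcases lt_or_eq_of_le hglb with h | h
    · exact h
    · exfalso
      have hcond := hKt j (by omega)
      have hψ : psi n k j = -π + 2*π*(j:ℝ)/k := by
        unfold psi
        rw [if_pos hjk]
      rw [hψ] at hcond
      have hzero : φ - (-π + 2*π*(j:ℝ)/k) = 0 := by
        rw [hgdef] at h; linarith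
      rw [hzero, Real.cos_zero] at hcond
      have := cos_eta_lt_one hn hk
      linarith
  refine ⟨j, hjk, ?_, ?_⟩
  · -- lower bound  φ ≥ lj
    unfold lj
    rcases Nat.eq_zero_or_pos j with hj0 | hjpos
    · rw [if_pos hj0]
      rw [hj0] at hglb'
      rcases Nat.eq_or_lt_of_le hkn with hnk | hnk
      · -- n = k : no extras
        have : min (n-k) 2 = 0 := by omega
        rw [this]
        simp only [Nat.cast_zero, zero_mul, add_zero]
        linarith [hg.1]
      · -- extras exist
        set e := min (n-k) 2 with he_def
        have he1 : 1 ≤ e := by omega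
        have he2 : e ≤ 2 := by omega
        set i0 := k + e - 1 with hi0_def
        have hi0n : i0 < n := by omega
        have hi0k : ¬ (i0 < k) := by omega
        have hcond := hKt i0 hi0n
        have hψ : psi n k i0 = -π + (e:ℝ) * del n k := by
          unfold psi
          rw [if_neg hi0k]
          have : min (i0 - k + 1) 2 = e := by omega
          rw [this]
        rw [hψ] at hcond
        have hdp := del_pos hn hk
        have heδ : (e:ℝ) * del n k ≤ eta n k := by
          have : (e:ℝ) ≤ 2 := by exact_mod_cast he2
          have h2 : del n k = eta n k / 2 := rfl
          nlinarith [Nat.cast_nonneg (α := ℝ) e]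
        have hx : φ - (-π + (e:ℝ)*del n k) = g - (e:ℝ)*del n k := by rw [hgdef]; ring
        rw [hx] at hcond
        have hlo : -(eta n k) < g - (e:ℝ)*del n k := by
          have h3 : (0:ℝ) ≤ (e:ℝ)*del n k := by positivity
          nlinarith [hgpos]
        have hhi : g - (e:ℝ)*del n k ≤ 2*π := by
          have h3 : (0:ℝ) ≤ (e:ℝ)*del n k := by positivity
          linarith
        have := cos_ge_imp2 hε hεpi hcond hlo hhi
        have hz : 2*π*((0:ℕ):ℝ)/(k:ℝ) = 0 := by norm_num
        linarith
    · rw [if_neg (by omega)]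
      have hcond := hKt j (by omega)
      have hψ : psi n k j = -π + 2*π*(j:ℝ)/k := by
        unfold psi
        rw [if_pos hjk]
      rw [hψ] at hcond
      have hx : φ - (-π + 2*π*(j:ℝ)/k) = g - 2*π*(j:ℝ)/k := by rw [hgdef]; ring
      rw [hx] at hcond
      have hfr0 : 0 ≤ 2*π*(j:ℝ)/k := by positivity
      have := (cos_ge_imp hε hεpi hcond (by linarith) (by linarith)).1
      linarith
  · -- upper bound φ ≤ rj
    unfold rj
    rcases Nat.eq_or_lt_of_le (by omega : j + 1 ≤ k) with hjk1 | hjk1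
    · -- j+1 = k : top wrap, use gap 0 bound
      have : 2*π*((j:ℝ)+1)/k = 2*π := by
        have : ((j:ℝ)+1) = (k:ℝ) := by exact_mod_cast hjk1
        rw [this]; field_simp
      push_cast
      rw [this]
      linarith [hg.2]
    · -- interior
      have hcond := hKt (j+1) (by omega)
      have hψ : psi n k (j+1) = -π + 2*π*((j:ℝ)+1)/k := by
        unfold psi
        rw [if_pos hjk1]
        push_cast; ring_nf
      rw [hψ] at hcond
      have hx : -(φ - (-π + 2*π*((j:ℝ)+1)/k)) = 2*π*((j:ℝ)+1)/k - g := by rw [hgdef]; ring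
      have hcond' : Real.cos (-(φ - (-π + 2*π*((j:ℝ)+1)/k))) ≤ Real.cos (eta n k) := by
        rw [Real.cos_neg]; exact hcond
      rw [hx] at hcond'
      have hj1k : 2*π*((j:ℝ)+1)/k ≤ 2*π := by
        rw [div_le_iff₀ hkp]
        have hle : ((j:ℝ)+1) ≤ (k:ℝ) := by
          have : ((j+1:ℕ):ℝ) ≤ (k:ℝ) := by exact_mod_cast le_of_lt hjk1
          push_cast at this; linarith
        nlinarith
      have := (cos_ge_imp hε hεpi hcond' (by linarith) (by linarith)).1
      push_cast
      linarith


def wpt (θ : ℝ) : ℝ × ℝ := (Real.cos θ, Real.sin θ)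

lemma wpt_unit (θ : ℝ) : (wpt θ).1^2 + (wpt θ).2^2 = 1 := by
  unfold wpt
  simp only
  nlinarith [Real.sin_sq_add_cos_sq θ]

lemma Mline_inj {w w' : ℝ×ℝ} (h : Mline w = Mline w') : w = w' := by
  have h0 : ((w'.1, w'.2, (0:ℝ)) : ℝ×ℝ×ℝ) ∈ Mline w' :=
    mem_Mline_iff.2 ⟨0, by norm_num⟩
  rw [← h] at h0
  obtain ⟨r, hr⟩ := mem_Mline_iff.1 h0
  have h3 : (0:ℝ) = r := congrArg (fun q => q.2.2) hr
  have h1 : w'.1 = w.1 + r*w.2 := congrArg (fun q => q.1) hr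
  have h2 : w'.2 = w.2 - r*w.1 := congrArg (fun q => q.2.1) hr
  have : w'.1 = w.1 := by rw [h1, ← h3]; ring
  have h2' : w'.2 = w.2 := by rw [h2, ← h3]; ring
  exact (Prod.ext this h2').symm

lemma arg_pair {x y : ℝ} (hw : x^2 + y^2 = 1) :
    Real.cos (Complex.arg ((x:ℂ) + (y:ℂ) * Complex.I)) = x ∧
    Real.sin (Complex.arg ((x:ℂ) + (y:ℂ) * Complex.I)) = y ∧
    ((x:ℂ) + (y:ℂ) * Complex.I) ≠ 0 := by
  set z := (x:ℂ) + (y:ℂ) * Complex.I with hz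
  have hre : z.re = x := by simp [hz]
  have him : z.im = y := by simp [hz]
  have hnsq : Complex.normSq z = 1 := by
    rw [Complex.normSq_apply, hre, him]
    nlinarith
  have habs : ‖z‖ = 1 := by
    rw [Complex.norm_def, hnsq, Real.sqrt_one]
  have hz0 : z ≠ 0 := by
    intro h
    rw [h] at habs
    simp at habs
  refine ⟨?_, ?_, hz0⟩
  · rw [Complex.cos_arg hz0, habs, hre]; norm_num
  · rw [Complex.sin_arg, habs, him]; norm_num

lemma wpt_arg {θ : ℝ} (hθ : θ ∈ Ioc (-π) π) :
    Complex.arg (((Real.cos θ) : ℂ) + ((Real.sin θ) : ℂ) * Complex.I) = θ := by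
  rw [Complex.ofReal_cos, Complex.ofReal_sin]
  exact Complex.arg_cos_add_sin_mul_I hθ

def Usec (n k : ℕ) (j : ℕ) : Set ℂ :=
  Complex.slitPlane ∩ Complex.arg ⁻¹' (Ioo (-π + 2*π*j/k) (-π + 2*π*(j+1)/k))

lemma Usec_open (n k j : ℕ) : IsOpen (Usec n k j) :=
  ContinuousOn.isOpen_inter_preimage
    (fun _ hz => (Complex.continuousAt_arg hz).continuousWithinAt)
    Complex.isOpen_slitPlane isOpen_Ioo

lemma mem_slit_of {z : ℂ} (hz : z ≠ 0) (ha : Complex.arg z ≠ π) : z ∈ Complex.slitPlane := by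
  rw [Complex.mem_slitPlane_iff]
  by_contra h
  push_neg at h
  obtain ⟨h1, h2⟩ := h
  rcases lt_or_eq_of_le h1 with h3 | h3
  · exact ha (Complex.arg_eq_pi_iff.2 ⟨h3, h2⟩)
  · exact hz (Complex.ext (by simp [← h3]) (by simpa using h2))


lemma bounds_lr (hn : 3 ≤ n) (hk : 1 ≤ k) (hkn : k ≤ n) {j : ℕ} (hj : j < k) :
    -π < lj n k j ∧ rj n k j ≤ π ∧
    Icc (lj n k j) (rj n k j) ⊆ Ioo (-π + 2*π*j/k) (-π + 2*π*(j+1)/k) := by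
  have hkp : (0:ℝ) < k := by have := kR hk; linarith
  have hpi := Real.pi_gt_three
  have hε := eta_pos hn hk
  have hdp := del_pos hn hk
  have hjk1 : ((j:ℝ)+1) ≤ (k:ℝ) := by
    have : ((j+1:ℕ):ℝ) ≤ (k:ℝ) := by exact_mod_cast hj
    push_cast at this; linarith
  have hj1k : 2*π*((j:ℝ)+1)/k ≤ 2*π := by
    rw [div_le_iff₀ hkp]; nlinarith
  have hlow : -π + 2*π*(j:ℝ)/k < lj n k j := by
    unfold lj
    split_ifs with h
    · rw [h]
      have hz : 2*π*((0:ℕ):ℝ)/(k:ℝ) = 0 := by norm_num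
      rw [hz]
      have h5 : (0:ℝ) ≤ ((min (n-k) 2:ℕ):ℝ) * del n k := by positivity
      linarith
    · linarith
  have hhigh : rj n k j < -π + 2*π*((j:ℝ)+1)/k := by
    unfold rj
    push_cast
    linarith
  refine ⟨?_, ?_, ?_⟩
  · have : 0 ≤ 2*π*(j:ℝ)/k := by positivity
    linarith
  · unfold rj
    push_cast
    linarith
  · intro θ hθ
    exact ⟨lt_of_lt_of_le hlow hθ.1, lt_of_le_of_lt hθ.2 hhigh⟩

lemma l0_lt_r0 (hn : 3 ≤ n) (hk : 1 ≤ k) (hkn : k ≤ n) : lj n k 0 < rj n k 0 := by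
  have hkp : (0:ℝ) < k := by have := kR hk; linarith
  have hpi := Real.pi_gt_three
  have hε := eta_pos hn hk
  have hdp := del_pos hn hk
  have htpk := eps_le_two_pi_div_k hn hk
  have hpik := two_eps_le_pi_div_k hn hk
  have heδ : ((min (n-k) 2:ℕ):ℝ) * del n k ≤ eta n k := by
    have h1 : ((min (n-k) 2 : ℕ):ℝ) ≤ 2 := by exact_mod_cast min_le_right _ _
    have h2 : (0:ℝ) ≤ ((min (n-k) 2 : ℕ):ℝ) := Nat.cast_nonneg _
    have h3 : del n k = eta n k / 2 := rfl
    nlinarith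
  unfold lj rj
  rw [if_pos rfl]
  have h4 : π/k + π/k = 2*π/k := by field_simp; ring
  have hz1 : 2*π*(((0:ℕ):ℝ)+1)/(k:ℝ) = 2*π/k := by norm_num
  rw [hz1]
  linarith

lemma dot_from_cos {θ : ℝ} (i : ℕ)
    (h : Real.cos (θ - psi n k i) ≤ Real.cos (eta n k)) :
    mconst n k ≤ (uvec n k i).1 * Real.cos θ + (uvec n k i).2 * Real.sin θ := by
  unfold uvec mconst
  simp only
  rw [Real.cos_sub] at h
  nlinarith [h]

lemma transversal_of_Kt (hn : 3 ≤ n) (hk : 1 ≤ k) {θ : ℝ} (hKt : Kt n k θ) :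
    IsTransversal (fun i : Fin n => Seg (uvec n k i) (Tconst n k)) (Mline (wpt θ)) := by
  constructor
  · refine ⟨((wpt θ).1, (wpt θ).2, 0), ((wpt θ).2, -(wpt θ).1, 1), ?_, rfl⟩
    intro h
    have : (1:ℝ) = 0 := congrArg (fun q => q.2.2) h
    norm_num at this
  · intro i
    apply (meets_iff (uvec_unit (n := n) (k := k) i) (wpt_unit θ)
      (m_gt hn hk) (T_pos hn hk) (T_eq hn hk)).2
    exact dot_from_cos i (hKt i i.isLt)


lemma sameComp_path (hn : 3 ≤ n) (hk : 1 ≤ k) (hkn : k ≤ n) {j : ℕ} (hj : j < k)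
    {φ0 φ1 : ℝ} (h0 : φ0 ∈ Icc (lj n k j) (rj n k j)) (h1 : φ1 ∈ Icc (lj n k j) (rj n k j)) :
    SameComp (fun i : Fin n => Seg (uvec n k i) (Tconst n k)) (Mline (wpt φ0)) (Mline (wpt φ1)) := by
  have hcont : Continuous (fun t : ℝ => φ0 + t*(φ1 - φ0)) := by fun_prop
  refine ⟨fun t => (Real.cos (φ0 + t*(φ1-φ0)), Real.sin (φ0 + t*(φ1-φ0)), 0),
    fun t => (Real.sin (φ0 + t*(φ1-φ0)), -Real.cos (φ0 + t*(φ1-φ0)), 1),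
    ?_, ?_, ?_, ?_, ?_, ?_⟩
  · exact ((Real.continuous_cos.comp hcont).prodMk
      ((Real.continuous_sin.comp hcont).prodMk continuous_const)).continuousOn
  · exact ((Real.continuous_sin.comp hcont).prodMk
      (((Real.continuous_cos.comp hcont).neg).prodMk continuous_const)).continuousOn
  · intro t _ h
    have : (1:ℝ) = 0 := congrArg (fun q => q.2.2) h
    norm_num at this
  · intro t ht i
    have hθmem : φ0 + t*(φ1-φ0) ∈ Icc (lj n k j) (rj n k j) := by
      constructor
      · nlinarith [ht.1, ht.2, h0.1, h1.1,
          mul_nonneg ht.1 (sub_nonneg.2 h1.1),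
          mul_nonneg (sub_nonneg.2 ht.2) (sub_nonneg.2 h0.1)]
      · nlinarith [ht.1, ht.2, h0.2, h1.2,
          mul_nonneg ht.1 (sub_nonneg.2 h1.2),
          mul_nonneg (sub_nonneg.2 ht.2) (sub_nonneg.2 h0.2)]
    have hKt := L1 hn hk hkn hj hθmem
    show (Mline (wpt (φ0 + t*(φ1-φ0))) ∩ Seg (uvec n k i) (Tconst n k)).Nonempty
    apply (meets_iff (uvec_unit (n := n) (k := k) i) (wpt_unit _)
      (m_gt hn hk) (T_pos hn hk) (T_eq hn hk)).2
    exact dot_from_cos i (hKt i i.isLt)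
  · have e0 : φ0 + 0*(φ1-φ0) = φ0 := by ring
    simp only [e0]
    rfl
  · have e1 : φ0 + 1*(φ1-φ0) = φ1 := by ring
    simp only [e1]
    rfl


lemma Usec_disj (hk : 1 ≤ k) {j1 j2 : ℕ} (hne : j1 ≠ j2) :
    Usec n k j1 ∩ Usec n k j2 = ∅ := by
  have hkp : (0:ℝ) < k := by have := kR hk; linarith
  have hpi := Real.pi_gt_three
  have key : ∀ j1' j2' : ℕ, j1' < j2' → Usec n k j1' ∩ Usec n k j2' = ∅ := by
    intro j1' j2' hlt
    rw [Set.eq_empty_iff_forall_notMem]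
    rintro z ⟨⟨_, hb⟩, ⟨_, hc⟩⟩
    rw [mem_preimage, mem_Ioo] at hb hc
    obtain ⟨_, hb⟩ := hb
    obtain ⟨hc, _⟩ := hc
    have hj12 : (j1':ℝ) + 1 ≤ (j2':ℝ) := by
      have : ((j1'+1:ℕ):ℝ) ≤ (j2':ℝ) := by exact_mod_cast hlt
      push_cast at this; linarith
    have : 2*π*((j1':ℝ)+1)/k ≤ 2*π*(j2':ℝ)/k := by gcongr
    linarith
  rcases lt_or_gt_of_ne hne with h | h
  · exact key _ _ h
  · rw [inter_comm]; exact key _ _ h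

lemma Z_mem_Usec (hn : 3 ≤ n) (hk : 1 ≤ k) (hkn : k ≤ n) {x y : ℝ} {j : ℕ} (hj : j < k)
    (hw : Complex.arg ((x:ℂ) + (y:ℂ)*Complex.I) ∈ Icc (lj n k j) (rj n k j))
    (hz0 : ((x:ℂ) + (y:ℂ)*Complex.I) ≠ 0) :
    ((x:ℂ) + (y:ℂ)*Complex.I) ∈ Usec n k j := by
  obtain ⟨hlow, hhigh, hsub⟩ := bounds_lr hn hk hkn hj
  have hIoo := hsub hw
  have hkp : (0:ℝ) < k := by have := kR hk; linarith
  have hpi := Real.pi_gt_three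
  have hε := eta_pos hn hk
  have hj1k : 2*π*((j:ℝ)+1)/k ≤ 2*π := by
    rw [div_le_iff₀ hkp]
    have : ((j+1:ℕ):ℝ) ≤ (k:ℝ) := by exact_mod_cast hj
    push_cast at this
    nlinarith
  have hrlt : rj n k j < π := by
    unfold rj
    push_cast
    linarith
  refine ⟨mem_slit_of hz0 ?_, hIoo⟩
  intro hpi_eq
  have h1 : Complex.arg ((x:ℂ) + (y:ℂ)*Complex.I) ≤ rj n k j := hw.2
  rw [hpi_eq] at h1
  linarith


set_option maxHeartbeats 2000000 in
lemma key_theorem (hn : 3 ≤ n) (hk1 : 1 ≤ k) (hkn : k ≤ n) :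
    {L : Set (ℝ × ℝ × ℝ) | IsTransversal (fun i : Fin n => Seg (uvec n k i) (Tconst n k)) L}.Infinite ∧
    ∃ T : Fin k → Set (ℝ × ℝ × ℝ),
      (∀ j, IsTransversal (fun i : Fin n => Seg (uvec n k i) (Tconst n k)) (T j)) ∧
      (∀ j j', j ≠ j' → ¬ SameComp (fun i : Fin n => Seg (uvec n k i) (Tconst n k)) (T j) (T j')) ∧
      ∀ L, IsTransversal (fun i : Fin n => Seg (uvec n k i) (Tconst n k)) L →
        ∃ j, SameComp (fun i : Fin n => Seg (uvec n k i) (Tconst n k)) L (T j) := by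
  have hk0 : 0 < k := hk1
  have hIccIoc : ∀ {j : ℕ}, j < k → Icc (lj n k j) (rj n k j) ⊆ Ioc (-π) π := by
    intro j hj x hx
    obtain ⟨hlow, hhigh, _⟩ := bounds_lr hn hk1 hkn hj
    exact ⟨lt_of_lt_of_le hlow hx.1, le_trans hx.2 hhigh⟩
  constructor
  · -- infinite
    have hinj : InjOn (fun θ => Mline (wpt θ)) (Icc (lj n k 0) (rj n k 0)) := by
      intro θ hθ θ' hθ' h
      have hww : wpt θ = wpt θ' := Mline_inj h
      have hc : Real.cos θ = Real.cos θ' := congrArg (fun q => q.1) hww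
      have hs : Real.sin θ = Real.sin θ' := congrArg (fun q => q.2) hww
      have h1 := wpt_arg (hIccIoc hk0 hθ)
      have h2 := wpt_arg (hIccIoc hk0 hθ')
      rw [← h1, ← h2, hc, hs]
    have hIccInf : (Icc (lj n k 0) (rj n k 0)).Infinite := by
      apply Set.infinite_coe_iff.1
      exact Set.Icc.infinite (l0_lt_r0 hn hk1 hkn)
    apply Set.Infinite.mono ?_ (hIccInf.image hinj)
    rintro L ⟨θ, hθ, rfl⟩
    exact transversal_of_Kt hn hk1 (L1 hn hk1 hkn hk0 hθ)
  · refine ⟨fun j => Mline (wpt (mu n k (j:ℕ))), ?_, ?_, ?_⟩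
    · intro j
      exact transversal_of_Kt hn hk1 (L1 hn hk1 hkn j.isLt (L3 hn hk1 j.isLt))
    · -- distinct components
      intro j j' hne hSC
      obtain ⟨a, v, hca, hcv, hvne, hmeets, he0, he1⟩ := hSC
      have hcl : ∀ t ∈ Icc (0:ℝ) 1, (v t).2.2 ≠ 0 ∧
          (-((v t).2.1)/(v t).2.2)^2 + ((v t).1/(v t).2.2)^2 = 1 ∧
          (∀ i : Fin n, mconst n k ≤ (uvec n k i).1 * (-((v t).2.1)/(v t).2.2)
            + (uvec n k i).2 * ((v t).1/(v t).2.2)) ∧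
          lineThrough (a t) (v t) = Mline (-((v t).2.1)/(v t).2.2, (v t).1/(v t).2.2) := by
        intro t ht
        exact classify hn hk1 (hvne t ht) (fun i => hmeets t ht i)
      have hZcont : ContinuousOn
          (fun t => (((-((v t).2.1)/(v t).2.2 : ℝ)):ℂ) + (((v t).1/(v t).2.2 : ℝ):ℂ)*Complex.I)
          (Icc 0 1) := by
        have h1 : ContinuousOn (fun t => -((v t).2.1)/(v t).2.2) (Icc (0:ℝ) 1) :=
          (hcv.snd.fst.neg).div hcv.snd.snd (fun t ht => (hcl t ht).1)
        have h2 : ContinuousOn (fun t => (v t).1/(v t).2.2) (Icc (0:ℝ) 1) :=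
          (hcv.fst).div hcv.snd.snd (fun t ht => (hcl t ht).1)
        exact (Complex.continuous_ofReal.comp_continuousOn h1).add
          ((Complex.continuous_ofReal.comp_continuousOn h2).mul continuousOn_const)
      have hsector : ∀ t ∈ Icc (0:ℝ) 1, ∃ j0 : Fin k,
          ((((-((v t).2.1)/(v t).2.2 : ℝ)):ℂ) + (((v t).1/(v t).2.2 : ℝ):ℂ)*Complex.I)
            ∈ Usec n k (j0:ℕ) := by
        intro t ht
        obtain ⟨hv3, hunit, hdots, hline⟩ := hcl t ht
        obtain ⟨hcos, hsin, hz0⟩ := arg_pair hunit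
        obtain ⟨j0, hj0k, hj0⟩ := L2 hn hk1 hkn hcos hsin (Complex.arg_mem_Ioc _) hdots
        exact ⟨⟨j0, hj0k⟩, Z_mem_Usec hn hk1 hkn hj0k hj0 hz0⟩
      have hend : ∀ (t : ℝ), t ∈ Icc (0:ℝ) 1 → ∀ (jj : Fin k),
          lineThrough (a t) (v t) = Mline (wpt (mu n k (jj:ℕ))) →
          ((((-((v t).2.1)/(v t).2.2 : ℝ)):ℂ) + (((v t).1/(v t).2.2 : ℝ):ℂ)*Complex.I)
            ∈ Usec n k (jj:ℕ) := by
        intro t ht jj hline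
        have hWt : ((-((v t).2.1)/(v t).2.2 : ℝ), ((v t).1/(v t).2.2 : ℝ)) = wpt (mu n k (jj:ℕ)) := by
          apply Mline_inj
          rw [← (hcl t ht).2.2.2, hline]
        have hx : (-((v t).2.1)/(v t).2.2 : ℝ) = Real.cos (mu n k (jj:ℕ)) :=
          congrArg (fun q => q.1) hWt
        have hy : ((v t).1/(v t).2.2 : ℝ) = Real.sin (mu n k (jj:ℕ)) :=
          congrArg (fun q => q.2) hWt
        have hmuIcc := L3 hn hk1 jj.isLt
        have hmuIoc := hIccIoc jj.isLt hmuIcc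
        have hz0 := (arg_pair (hcl t ht).2.1).2.2
        apply Z_mem_Usec hn hk1 hkn jj.isLt ?_ hz0
        rw [hx, hy, wpt_arg hmuIoc]
        exact hmuIcc
      haveI : PreconnectedSpace (Icc (0:ℝ) 1) := Subtype.preconnectedSpace isPreconnected_Icc
      set f : (Icc (0:ℝ) 1) → ℂ :=
        fun t => (((-((v t.1).2.1)/(v t.1).2.2 : ℝ)):ℂ) + (((v t.1).1/(v t.1).2.2 : ℝ):ℂ)*Complex.I
        with hf_def
      have hfc : Continuous f := hZcont.restrict
      have hAopen : IsOpen (f ⁻¹' (Usec n k (j:ℕ))) := (Usec_open n k j).preimage hfc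
      have hBopen : IsOpen (f ⁻¹' (⋃ (j'' : Fin k) (_ : j'' ≠ j), Usec n k (j'':ℕ))) := by
        apply IsOpen.preimage hfc
        exact isOpen_iUnion (fun j'' => isOpen_iUnion (fun _ => Usec_open n k j''))
      have hdisj : Disjoint (f ⁻¹' (Usec n k (j:ℕ)))
          (f ⁻¹' (⋃ (j'' : Fin k) (_ : j'' ≠ j), Usec n k (j'':ℕ))) := by
        rw [Set.disjoint_iff_inter_eq_empty, Set.eq_empty_iff_forall_notMem]
        rintro t ⟨hA, hB⟩
        rw [mem_preimage, mem_iUnion] at hB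
        obtain ⟨j'', hj''⟩ := hB
        rw [mem_iUnion] at hj''
        obtain ⟨hj''ne, hj''mem⟩ := hj''
        have hemp := Usec_disj (n := n) hk1
          (fun h => hj''ne (Fin.ext h.symm) : (j:ℕ) ≠ (j'':ℕ))
        rw [Set.eq_empty_iff_forall_notMem] at hemp
        exact hemp (f t) ⟨hA, hj''mem⟩
      have hcover : (univ : Set (Icc (0:ℝ) 1)) ⊆ (f ⁻¹' (Usec n k (j:ℕ))) ∪
          (f ⁻¹' (⋃ (j'' : Fin k) (_ : j'' ≠ j), Usec n k (j'':ℕ))) := by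
        intro t _
        obtain ⟨j0, hj0⟩ := hsector t.1 t.2
        by_cases h : j0 = j
        · left
          rw [mem_preimage]
          rw [← h]
          exact hj0
        · right
          rw [mem_preimage, mem_iUnion]
          exact ⟨j0, mem_iUnion.2 ⟨h, hj0⟩⟩
      have h0mem : (⟨0, by norm_num⟩ : Icc (0:ℝ) 1) ∈ f ⁻¹' (Usec n k (j:ℕ)) := by
        rw [mem_preimage]
        exact hend 0 (by norm_num) j he0
      have hsub : (univ : Set (Icc (0:ℝ) 1)) ⊆ f ⁻¹' (Usec n k (j:ℕ)) :=
        IsPreconnected.subset_left_of_subset_union hAopen hBopen hdisj hcover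
          ⟨⟨0, by norm_num⟩, trivial, h0mem⟩ isPreconnected_univ
      have h1A : f ⟨1, by norm_num⟩ ∈ Usec n k (j:ℕ) := hsub trivial
      have h1B : f ⟨1, by norm_num⟩ ∈ Usec n k (j':ℕ) := hend 1 (by norm_num) j' he1
      have hemp := Usec_disj (n := n) hk1 (fun h => hne (Fin.ext h) : (j:ℕ) ≠ (j':ℕ))
      rw [Set.eq_empty_iff_forall_notMem] at hemp
      exact hemp _ ⟨h1A, h1B⟩
    · -- completeness
      intro L hL
      obtain ⟨⟨a, v, hvne, hLeq⟩, hmeets⟩ := hL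
      rw [hLeq] at hmeets ⊢
      obtain ⟨hv3, hunit, hdots, hline⟩ := classify hn hk1 hvne (fun i => hmeets i)
      obtain ⟨hcos, hsin, hz0⟩ := arg_pair hunit
      obtain ⟨j0, hj0k, hj0⟩ := L2 hn hk1 hkn hcos hsin (Complex.arg_mem_Ioc _) hdots
      refine ⟨⟨j0, hj0k⟩, ?_⟩
      have hwpt : ((-(v.2.1)/v.2.2 : ℝ), (v.1/v.2.2 : ℝ)) =
          wpt (Complex.arg ((((-(v.2.1)/v.2.2 : ℝ)):ℂ) + ((v.1/v.2.2 : ℝ):ℂ)*Complex.I)) := by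
        exact (Prod.ext hcos hsin).symm
      rw [hline, hwpt]
      exact sameComp_path hn hk1 hkn hj0k hj0 (L3 hn hk1 hj0k)

end AuxiliaryDevelopment

/-- for every `n ≥ 3` and `1 ≤ k ≤ n` there are `n` segments in ℝ³ with
infinitely many transversals forming exactly `k` connected components. -/
theorem stmt_2 (n k : ℕ) (hn : 3 ≤ n) (hk1 : 1 ≤ k) (hkn : k ≤ n) :
    ∃ x y : Fin n → ℝ × ℝ × ℝ,
      {L : Set (ℝ × ℝ × ℝ) | IsTransversal (fun i => segment ℝ (x i) (y i)) L}.Infinite ∧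
      ∃ T : Fin k → Set (ℝ × ℝ × ℝ),
        (∀ j, IsTransversal (fun i => segment ℝ (x i) (y i)) (T j)) ∧
        (∀ j j', j ≠ j' → ¬ SameComp (fun i => segment ℝ (x i) (y i)) (T j) (T j')) ∧
        ∀ L, IsTransversal (fun i => segment ℝ (x i) (y i)) L →
          ∃ j, SameComp (fun i => segment ℝ (x i) (y i)) L (T j) := by
  refine ⟨fun i => Lpt (uvec n k i) (-(Tconst n k)), fun i => Lpt (uvec n k i) (Tconst n k), ?_⟩
  exact key_theorem hn hk1 hkn
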